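/- arXiv:2104.12826 — 5 statements merged into one kernel-verified Lean document; each statement's English description precedes it below -/
import Mathlib

section
/- Fix a real E-by-V matrix d, a diagonal V-by-V matrix ★₀, a diagonal E-by-E matrix ★₁, and an edge e ∈ E. For t ∈ ℝ let ★₁(t) = ★₁ + t Eₑₑ, where Eₑₑ is the diagonal matrix with a single 1 in entry (e, e). Suppose x(t) ∈ ℝ^V and λ(t) ∈ ℝ are differentiable at 0 and satisfy dᵀ★₁(t)d x(t) = λ(t) ★₀ x(t) and x(t)ᵀ★₀x(t) = 1 for all t near 0. Then λ'(0) = (yₑ)², where y = d x(0). -/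
open Matrix Filter Topology

set_option linter.unusedSectionVars false

lemma hasDerivAt_dot {V : Type*} [Fintype V] (u v : ℝ → V → ℝ) (u' v' : V → ℝ)
    (hu : ∀ i, HasDerivAt (fun t => u t i) (u' i) 0)
    (hv : ∀ i, HasDerivAt (fun t => v t i) (v' i) 0) :
    HasDerivAt (fun t => u t ⬝ᵥ v t) (u' ⬝ᵥ v 0 + u 0 ⬝ᵥ v') 0 := by
  simp only [dotProduct, ← Finset.sum_add_distrib]
  exact HasDerivAt.fun_sum fun i _ => (hu i).mul (hv i)

lemma hasDerivAt_mulVec {V : Type*} [Fintype V] (B : Matrix V V ℝ) (x : ℝ → V → ℝ) (x' : V → ℝ)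
    (hx : ∀ i, HasDerivAt (fun t => x t i) (x' i) 0) (i : V) :
    HasDerivAt (fun t => (B *ᵥ x t) i) ((B *ᵥ x') i) 0 := by
  simp only [Matrix.mulVec, dotProduct]
  exact HasDerivAt.fun_sum fun j _ => (hx j).const_mul _

/-- Derivative of a generalized eigenvalue of the pencil `(dᵀ★₁(t)d, ★₀)` under
perturbation `★₁(t) = ★₁ + t Eₑₑ` of a single diagonal entry: with the normalization
`x(t)ᵀ★₀x(t) = 1`, we have `λ'(0) = (yₑ)²` where `y = d x(0)`. -/
theorem stmt_8 {E V : Type*} [Fintype E] [Fintype V] [DecidableEq E] [DecidableEq V]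
    (d : Matrix E V ℝ) (s0 : V → ℝ) (s1 : E → ℝ) (e : E)
    (x : ℝ → V → ℝ) (lam : ℝ → ℝ) (x' : V → ℝ) (lam' : ℝ)
    (hx : HasDerivAt x x' 0) (hlam : HasDerivAt lam lam' 0)
    (heig : ∀ᶠ t in 𝓝 (0 : ℝ),
      (dᵀ * (Matrix.diagonal s1 + t • Matrix.single e e 1) * d) *ᵥ x t
        = lam t • (Matrix.diagonal s0 *ᵥ x t))
    (hnorm : ∀ᶠ t in 𝓝 (0 : ℝ), x t ⬝ᵥ (Matrix.diagonal s0 *ᵥ x t) = 1) :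
    lam' = ((d *ᵥ x 0) e) ^ 2 := by
  have hxi : ∀ i, HasDerivAt (fun t => x t i) (x' i) 0 := hasDerivAt_pi.mp hx
  set B : Matrix V V ℝ := dᵀ * Matrix.diagonal s1 * d with hB
  set C : Matrix V V ℝ := dᵀ * Matrix.single e e (1:ℝ) * d with hC
  set S : Matrix V V ℝ := Matrix.diagonal s0 with hS
  -- eigen equation at 0
  have heig0 : B *ᵥ x 0 = lam 0 • (S *ᵥ x 0) := by
    have := heig.self_of_nhds
    simpa using this
  -- norm derivative is zero
  have hnd : HasDerivAt (fun t => x t ⬝ᵥ (S *ᵥ x t)) (x' ⬝ᵥ (S *ᵥ x 0) + x 0 ⬝ᵥ (S *ᵥ x')) 0 :=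
    hasDerivAt_dot x (fun t => S *ᵥ x t) x' (S *ᵥ x') hxi (hasDerivAt_mulVec S x x' hxi)
  have hN : x' ⬝ᵥ (S *ᵥ x 0) + x 0 ⬝ᵥ (S *ᵥ x') = 0 := by
    have hconst : HasDerivAt (fun _ : ℝ => (1 : ℝ)) 0 0 := hasDerivAt_const 0 1
    have := hconst.congr_of_eventuallyEq (hnorm.mono fun t ht => ht)
    exact hnd.unique this
  -- the scalar function g
  have hg : HasDerivAt (fun t => x t ⬝ᵥ (B *ᵥ x t) + t * (x t ⬝ᵥ (C *ᵥ x t)))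
      ((x' ⬝ᵥ (B *ᵥ x 0) + x 0 ⬝ᵥ (B *ᵥ x')) +
        (1 * (x 0 ⬝ᵥ (C *ᵥ x 0)) + 0 * (x' ⬝ᵥ (C *ᵥ x 0) + x 0 ⬝ᵥ (C *ᵥ x')))) 0 := by
    exact (hasDerivAt_dot x (fun t => B *ᵥ x t) x' (B *ᵥ x') hxi
        (hasDerivAt_mulVec B x x' hxi)).add
      ((hasDerivAt_id 0).mul (hasDerivAt_dot x (fun t => C *ᵥ x t) x' (C *ᵥ x') hxi
        (hasDerivAt_mulVec C x x' hxi)))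
  -- g = lam eventually
  have hgeq : (fun t => x t ⬝ᵥ (B *ᵥ x t) + t * (x t ⬝ᵥ (C *ᵥ x t))) =ᶠ[𝓝 (0:ℝ)] lam := by
    filter_upwards [heig, hnorm] with t ht hn
    have hA : (dᵀ * (Matrix.diagonal s1 + t • Matrix.single e e 1) * d)
        = B + t • C := by
      rw [hB, hC, Matrix.mul_add, Matrix.add_mul, Matrix.mul_smul, Matrix.smul_mul]
    rw [hA] at ht
    have : x t ⬝ᵥ ((B + t • C) *ᵥ x t) = lam t := by
      rw [ht, dotProduct_smul, hn]; simp
    rw [Matrix.add_mulVec, dotProduct_add, Matrix.smul_mulVec,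
      dotProduct_smul] at this
    simpa [smul_eq_mul] using this
  have hglam : HasDerivAt lam ((x' ⬝ᵥ (B *ᵥ x 0) + x 0 ⬝ᵥ (B *ᵥ x')) +
        (1 * (x 0 ⬝ᵥ (C *ᵥ x 0)) + 0 * (x' ⬝ᵥ (C *ᵥ x 0) + x 0 ⬝ᵥ (C *ᵥ x')))) 0 :=
    hg.congr_of_eventuallyEq hgeq.symm
  have key : lam' = (x' ⬝ᵥ (B *ᵥ x 0) + x 0 ⬝ᵥ (B *ᵥ x')) + x 0 ⬝ᵥ (C *ᵥ x 0) := by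
    have := hlam.unique hglam; linarith [this]
  have hBsym : Bᵀ = B := by
    rw [hB]; simp [Matrix.transpose_mul, Matrix.mul_assoc]
  have h1 : x' ⬝ᵥ (B *ᵥ x 0) = lam 0 * (x' ⬝ᵥ (S *ᵥ x 0)) := by
    rw [heig0, dotProduct_smul, smul_eq_mul]
  have h2 : x 0 ⬝ᵥ (B *ᵥ x') = lam 0 * (x 0 ⬝ᵥ (S *ᵥ x')) := by
    have : x 0 ⬝ᵥ (B *ᵥ x') = (B *ᵥ x 0) ⬝ᵥ x' := by
      rw [Matrix.dotProduct_mulVec, ← Matrix.mulVec_transpose, hBsym]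
    rw [this, heig0, smul_dotProduct, smul_eq_mul]
    congr 1
    rw [Matrix.dotProduct_mulVec, ← Matrix.mulVec_transpose]
    congr 1
    rw [hS, Matrix.diagonal_transpose]
  -- x 0 ⬝ᵥ (C *ᵥ x 0) = ((d *ᵥ x 0) e)^2
  have h3 : x 0 ⬝ᵥ (C *ᵥ x 0) = ((d *ᵥ x 0) e) ^ 2 := by
    have hM : ∀ (y : E → ℝ), y ⬝ᵥ (Matrix.single e e (1:ℝ) *ᵥ y) = y e ^ 2 := by
      intro y
      simp [Matrix.mulVec, dotProduct, Matrix.single, ite_and, sq,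
        Finset.sum_ite_eq, Finset.mul_sum]
    rw [hC, Matrix.mul_assoc, ← Matrix.mulVec_mulVec, Matrix.dotProduct_mulVec,
      Matrix.vecMul_transpose, ← Matrix.mulVec_mulVec, hM]
  rw [key, h1, h2, ← mul_add, hN, mul_zero, zero_add, h3]
end

section
/- Fix a real E-by-V matrix d, a diagonal V-by-V matrix ★₀, a diagonal E-by-E matrix ★₁, and a vertex v ∈ V. For t ∈ ℝ let ★₀(t) = ★₀ + t Eᵥᵥ, where Eᵥᵥ is the diagonal matrix with a single 1 in entry (v, v). Suppose x(t) ∈ ℝ^V and λ(t) ∈ ℝ are differentiable at 0 and satisfy dᵀ★₁d x(t) = λ(t) ★₀(t) x(t) and x(t)ᵀ★₀(t)x(t) = 1 for all t near 0. Then λ'(0) = −λ(0) (xᵥ(0))². -/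
open Matrix Filter Topology

private lemma dot_deriv {V : Type*} [Fintype V] (M : Matrix V V ℝ)
    (x : ℝ → V → ℝ) (x' : V → ℝ) (hx : HasDerivAt x x' 0) :
    HasDerivAt (fun t => x t ⬝ᵥ (M *ᵥ x t))
      (x' ⬝ᵥ (M *ᵥ x 0) + x 0 ⬝ᵥ (M *ᵥ x')) 0 := by
  have hxi : ∀ i, HasDerivAt (fun t => x t i) (x' i) 0 := fun i =>
    (hasDerivAt_pi.mp hx) i
  have key : HasDerivAt (fun t => ∑ i, ∑ j, x t i * (M i j * x t j))
      (∑ i, ∑ j, (x' i * (M i j * x 0 j) + x 0 i * (M i j * x' j))) 0 := by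
    apply HasDerivAt.fun_sum; intro i _; apply HasDerivAt.fun_sum; intro j _
    exact (hxi i).mul ((hxi j).const_mul (M i j))
  have heq : (fun t => x t ⬝ᵥ (M *ᵥ x t))
      = fun t => ∑ i, ∑ j, x t i * (M i j * x t j) := by
    funext t; simp [dotProduct, mulVec, Finset.mul_sum]
  rw [heq]
  convert key using 1
  simp [dotProduct, mulVec, Finset.mul_sum, Finset.sum_add_distrib]

/-- Derivative of a generalized eigenvalue of the pencil `(dᵀ★₁d, ★₀(t))` under
perturbation `★₀(t) = ★₀ + t Eᵥᵥ` of a single diagonal entry: with the normalization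
`x(t)ᵀ★₀(t)x(t) = 1`, we have `λ'(0) = −λ(0) (xᵥ(0))²`. -/
theorem stmt_9 {E V : Type*} [Fintype E] [Fintype V] [DecidableEq E] [DecidableEq V]
    (d : Matrix E V ℝ) (s0 : V → ℝ) (s1 : E → ℝ) (v : V)
    (x : ℝ → V → ℝ) (lam : ℝ → ℝ) (x' : V → ℝ) (lam' : ℝ)
    (hx : HasDerivAt x x' 0) (hlam : HasDerivAt lam lam' 0)
    (heig : ∀ᶠ t in 𝓝 (0 : ℝ),
      (dᵀ * Matrix.diagonal s1 * d) *ᵥ x t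
        = lam t • ((Matrix.diagonal s0 + t • Matrix.single v v 1) *ᵥ x t))
    (hnorm : ∀ᶠ t in 𝓝 (0 : ℝ),
      x t ⬝ᵥ ((Matrix.diagonal s0 + t • Matrix.single v v 1) *ᵥ x t) = 1) :
    lam' = -lam 0 * (x 0 v) ^ 2 := by
  set A := dᵀ * Matrix.diagonal s1 * d with hA
  set S := Matrix.single v v (1 : ℝ) with hS
  have hAsymm : Aᵀ = A := by
    rw [hA]
    simp [Matrix.transpose_mul, Matrix.diagonal_transpose, Matrix.mul_assoc]
  have hAs : ∀ a b : V → ℝ, a ⬝ᵥ (A *ᵥ b) = b ⬝ᵥ (A *ᵥ a) := by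
    intro a b
    simp only [dotProduct, mulVec, Finset.mul_sum]
    rw [Finset.sum_comm]
    refine Finset.sum_congr rfl fun i _ => Finset.sum_congr rfl fun j _ => ?_
    have h := congrFun (congrFun hAsymm i) j
    rw [Matrix.transpose_apply] at h
    rw [← h]; ring
  have hdsym : ∀ a b : V → ℝ,
      a ⬝ᵥ (Matrix.diagonal s0 *ᵥ b) = b ⬝ᵥ (Matrix.diagonal s0 *ᵥ a) := by
    intro a b
    simp only [dotProduct, Matrix.mulVec_diagonal]
    exact Finset.sum_congr rfl fun i _ => by ring
  -- eigen equation at 0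
  have heig0 : A *ᵥ x 0 = lam 0 • (Matrix.diagonal s0 *ᵥ x 0) := by
    have := heig.self_of_nhds
    simpa using this
  -- lam t = x t ⬝ᵥ A *ᵥ x t eventually
  have hlamEq : (fun t => x t ⬝ᵥ (A *ᵥ x t)) =ᶠ[𝓝 (0:ℝ)] lam := by
    filter_upwards [heig, hnorm] with t h1 h2
    rw [h1, dotProduct_smul, smul_eq_mul, h2, mul_one]
  -- derivative of lam via the quadratic form
  have hq : HasDerivAt (fun t => x t ⬝ᵥ (A *ᵥ x t))
      (x' ⬝ᵥ (A *ᵥ x 0) + x 0 ⬝ᵥ (A *ᵥ x')) 0 := dot_deriv A x x' hx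
  have hq' : HasDerivAt lam (x' ⬝ᵥ (A *ᵥ x 0) + x 0 ⬝ᵥ (A *ᵥ x')) 0 :=
    hq.congr_of_eventuallyEq hlamEq.symm
  have hlam'eq : lam' = x' ⬝ᵥ (A *ᵥ x 0) + x 0 ⬝ᵥ (A *ᵥ x') :=
    hlam.unique hq'
  set c : ℝ := x 0 ⬝ᵥ (Matrix.diagonal s0 *ᵥ x') with hc
  have h1 : x' ⬝ᵥ (A *ᵥ x 0) = lam 0 * c := by
    rw [heig0, dotProduct_smul, smul_eq_mul, hdsym]
  have h2 : x 0 ⬝ᵥ (A *ᵥ x') = lam 0 * c := by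
    rw [hAs]; exact h1
  -- derivative of the normalization
  have hg : HasDerivAt (fun t => x t ⬝ᵥ ((Matrix.diagonal s0 + t • S) *ᵥ x t))
      ((x' ⬝ᵥ (Matrix.diagonal s0 *ᵥ x 0) + x 0 ⬝ᵥ (Matrix.diagonal s0 *ᵥ x'))
        + x 0 ⬝ᵥ (S *ᵥ x 0)) 0 := by
    have hfun : ∀ t, x t ⬝ᵥ ((Matrix.diagonal s0 + t • S) *ᵥ x t)
        = x t ⬝ᵥ (Matrix.diagonal s0 *ᵥ x t) + t * (x t ⬝ᵥ (S *ᵥ x t)) := by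
      intro t
      rw [Matrix.add_mulVec, dotProduct_add, Matrix.smul_mulVec,
        dotProduct_smul, smul_eq_mul]
    simp only [hfun]
    have hd1 := dot_deriv (Matrix.diagonal s0) x x' hx
    have hd2 := (hasDerivAt_id (0:ℝ)).mul (dot_deriv S x x' hx)
    have := hd1.add hd2
    convert this using 1
    · rfl
    · rfl
    · funext t; simp
    · simp
  have hgconst : HasDerivAt
      (fun t => x t ⬝ᵥ ((Matrix.diagonal s0 + t • S) *ᵥ x t)) 0 0 := by
    have h : (fun t => x t ⬝ᵥ ((Matrix.diagonal s0 + t • S) *ᵥ x t)) =ᶠ[𝓝 (0:ℝ)]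
        (fun _ => (1:ℝ)) := hnorm
    exact (hasDerivAt_const (0:ℝ) (1:ℝ)).congr_of_eventuallyEq h
  have hzero : (x' ⬝ᵥ (Matrix.diagonal s0 *ᵥ x 0) + x 0 ⬝ᵥ (Matrix.diagonal s0 *ᵥ x'))
      + x 0 ⬝ᵥ (S *ᵥ x 0) = 0 := hg.unique hgconst
  have hsym : x' ⬝ᵥ (Matrix.diagonal s0 *ᵥ x 0) = c := hdsym x' (x 0)
  have hSval : x 0 ⬝ᵥ (S *ᵥ x 0) = (x 0 v) ^ 2 := by
    simp [hS, dotProduct, mulVec, Matrix.single, Finset.mul_sum, ite_and, sq]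
  rw [hsym, ← hc, hSval] at hzero
  rw [hlam'eq, h1, h2]
  have h2c : (2:ℝ) * c = -(x 0 v) ^ 2 := by linarith
  linear_combination lam 0 * h2c
end

section
/- Fix a real E-by-V matrix d, a diagonal V-by-V matrix ★₀ with positive diagonal, a diagonal E-by-E matrix ★₁, an edge e ∈ E, and n = |V|. For t ∈ ℝ let ★₁(t) = ★₁ + t Eₑₑ. Suppose xⁱ(t) ∈ ℝ^V and λⁱ(t) ∈ ℝ (i = 1, …, n) are differentiable at 0, satisfy dᵀ★₁(t)d xⁱ(t) = λⁱ(t) ★₀ xⁱ(t) and (xⁱ(t))ᵀ★₀xⁱ(t) = 1 near 0, satisfy (xⁱ(0))ᵀ★₀xʲ(0) = δᵢⱼ, and the eigenvalues λ¹(0), …, λⁿ(0) are pairwise distinct. Then for each i, (xⁱ)'(0) = Σ_{j ≠ i} (λⁱ(0) − λʲ(0))⁻¹ · yⱼₑ · yⁱₑ · xʲ(0), where yⁱ = d xⁱ(0) and yⱼₑ denotes component e of d xʲ(0). -/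
open Matrix Filter Topology

private lemma dot_sum' {V ι : Type*} [Fintype V] (u : V → ℝ) (s : Finset ι) (f : ι → V → ℝ) :
    u ⬝ᵥ (∑ j ∈ s, f j) = ∑ j ∈ s, u ⬝ᵥ f j := by
  simp only [dotProduct, Finset.sum_apply, Finset.mul_sum]
  exact Finset.sum_comm

/-- Derivative of a `★₀`-orthonormalized generalized eigenvector of the pencil
`(dᵀ★₁(t)d, ★₀)` under perturbation `★₁(t) = ★₁ + t Eₑₑ`, with pairwise distinct eigenvalues:
`(xⁱ)'(0) = Σ_{j ≠ i} (λⁱ − λʲ)⁻¹ yʲₑ yⁱₑ xʲ`, where `yⁱ = d xⁱ(0)`. -/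
theorem stmt_12 {E V : Type*} [Fintype E] [Fintype V] [DecidableEq E] [DecidableEq V]
    (d : Matrix E V ℝ) (s0 : V → ℝ) (hs0 : ∀ v, 0 < s0 v) (s1 : E → ℝ) (e : E)
    (x : V → ℝ → V → ℝ) (lam : V → ℝ → ℝ)
    (x' : V → V → ℝ) (lam' : V → ℝ)
    (hx : ∀ i, HasDerivAt (x i) (x' i) 0)
    (hlam : ∀ i, HasDerivAt (lam i) (lam' i) 0)
    (heig : ∀ i, ∀ᶠ t in 𝓝 (0 : ℝ),
      (dᵀ * (Matrix.diagonal s1 + t • Matrix.single e e 1) * d) *ᵥ x i t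
        = lam i t • (Matrix.diagonal s0 *ᵥ x i t))
    (hnorm : ∀ i, ∀ᶠ t in 𝓝 (0 : ℝ), x i t ⬝ᵥ (Matrix.diagonal s0 *ᵥ x i t) = 1)
    (horth : ∀ i j, x i 0 ⬝ᵥ (Matrix.diagonal s0 *ᵥ x j 0) = if i = j then 1 else 0)
    (hdist : ∀ i j, i ≠ j → lam i 0 ≠ lam j 0) :
    ∀ i, x' i = ∑ j ∈ Finset.univ.erase i,
      ((lam i 0 - lam j 0)⁻¹ * ((d *ᵥ x j 0) e) * ((d *ᵥ x i 0) e)) • x j 0 := by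
  intro i
  have hne : Nonempty V := ⟨i⟩
  set S := Matrix.diagonal s0 with hS
  set A0 := dᵀ * Matrix.diagonal s1 * d with hA0
  set B := dᵀ * Matrix.single e e (1:ℝ) * d with hB
  -- derivative of dot products
  have hdot : ∀ (k : V) (c : V → ℝ), HasDerivAt (fun t => c ⬝ᵥ x k t) (c ⬝ᵥ x' k) 0 := by
    intro k c
    have h := hasDerivAt_pi.1 (hx k)
    simpa [dotProduct] using HasDerivAt.fun_sum (u := Finset.univ)
      (fun v _ => ((h v).const_mul (c v)))
  have hdotM : ∀ (k : V) (u : V → ℝ) (M : Matrix V V ℝ),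
      HasDerivAt (fun t => u ⬝ᵥ (M *ᵥ x k t)) (u ⬝ᵥ (M *ᵥ x' k)) 0 := by
    intro k u M
    simpa only [Matrix.dotProduct_mulVec] using hdot k (u ᵥ* M)
  -- eigen equation at t = 0
  have heig0 : ∀ k, A0 *ᵥ x k 0 = lam k 0 • (S *ᵥ x k 0) := by
    intro k
    have h := (heig k).self_of_nhds
    simpa [hA0, hS] using h
  -- symmetry facts
  have hA0symm : A0ᵀ = A0 := by
    rw [hA0]
    simp [Matrix.transpose_mul, Matrix.mul_assoc]
  have hSsymm : ∀ (u w : V → ℝ), u ⬝ᵥ (S *ᵥ w) = w ⬝ᵥ (S *ᵥ u) := by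
    intro u w
    simp only [hS, dotProduct, Matrix.mulVec_diagonal]
    exact Finset.sum_congr rfl fun v _ => by ring
  have hA0dot : ∀ (j : V) (w : V → ℝ),
      x j 0 ⬝ᵥ (A0 *ᵥ w) = lam j 0 * (x j 0 ⬝ᵥ (S *ᵥ w)) := by
    intro j w
    calc x j 0 ⬝ᵥ (A0 *ᵥ w) = (A0 *ᵥ x j 0) ⬝ᵥ w := by
          rw [Matrix.dotProduct_mulVec, ← Matrix.mulVec_transpose, hA0symm]
      _ = lam j 0 * ((S *ᵥ x j 0) ⬝ᵥ w) := by rw [heig0 j]; simp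
      _ = lam j 0 * (x j 0 ⬝ᵥ (S *ᵥ w)) := by
          rw [dotProduct_comm, hSsymm w (x j 0)]
  have hstd : ∀ (u w : E → ℝ), u ⬝ᵥ (Matrix.single e e 1 *ᵥ w) = u e * w e := by
    intro u w
    simp [dotProduct, Matrix.mulVec, Matrix.single, Finset.mul_sum, ite_and]
  have hBdot : ∀ (u w : V → ℝ), u ⬝ᵥ (B *ᵥ w) = (d *ᵥ u) e * (d *ᵥ w) e := by
    intro u w
    rw [hB, Matrix.mul_assoc, ← Matrix.mulVec_mulVec, ← Matrix.mulVec_mulVec,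
      Matrix.dotProduct_mulVec, Matrix.vecMul_transpose, hstd]
  -- matrix pencil decomposition
  have hAt : ∀ t : ℝ, dᵀ * (Matrix.diagonal s1 + t • Matrix.single e e 1) * d
      = A0 + t • B := by
    intro t
    rw [hA0, hB]
    rw [Matrix.mul_add, Matrix.add_mul, Matrix.mul_smul, Matrix.smul_mul]
  -- the key derivative identity, for each j
  have key : ∀ j : V,
      x j 0 ⬝ᵥ (A0 *ᵥ x' i) + x j 0 ⬝ᵥ (B *ᵥ x i 0)
        = lam' i * (x j 0 ⬝ᵥ (S *ᵥ x i 0)) + lam i 0 * (x j 0 ⬝ᵥ (S *ᵥ x' i)) := by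
    intro j
    set a := x j 0 with ha
    -- LHS derivative
    have hg : HasDerivAt (fun t => a ⬝ᵥ (B *ᵥ x i t)) (a ⬝ᵥ (B *ᵥ x' i)) 0 := hdotM i a B
    have h2 : HasDerivAt (fun t => t * (a ⬝ᵥ (B *ᵥ x i t))) (a ⬝ᵥ (B *ᵥ x i 0)) 0 := by
      have := (hasDerivAt_id (0 : ℝ)).fun_mul hg
      simpa using this
    have hL : HasDerivAt
        (fun t => a ⬝ᵥ ((dᵀ * (Matrix.diagonal s1 + t • Matrix.single e e 1) * d) *ᵥ x i t))
        (a ⬝ᵥ (A0 *ᵥ x' i) + a ⬝ᵥ (B *ᵥ x i 0)) 0 := by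
      have h := (hdotM i a A0).add h2
      apply h.congr_of_eventuallyEq
      filter_upwards with t
      rw [hAt t, Matrix.add_mulVec, Matrix.smul_mulVec, dotProduct_add,
        dotProduct_smul]
      simp [smul_eq_mul]
    -- RHS derivative
    have hR : HasDerivAt (fun t => a ⬝ᵥ (lam i t • (S *ᵥ x i t)))
        (lam' i * (a ⬝ᵥ (S *ᵥ x i 0)) + lam i 0 * (a ⬝ᵥ (S *ᵥ x' i))) 0 := by
      have h := (hlam i).fun_mul (hdotM i a S)
      apply h.congr_of_eventuallyEq
      filter_upwards with t
      rw [dotProduct_smul, smul_eq_mul]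
    have heq : (fun t => a ⬝ᵥ ((dᵀ * (Matrix.diagonal s1 + t • Matrix.single e e 1) * d) *ᵥ x i t))
        =ᶠ[𝓝 (0:ℝ)] (fun t => a ⬝ᵥ (lam i t • (S *ᵥ x i t))) := by
      filter_upwards [heig i] with t ht
      rw [ht]
    exact (hL.congr_of_eventuallyEq heq.symm).unique hR
  -- coefficients for j ≠ i
  have hcoef : ∀ j : V, j ≠ i →
      x j 0 ⬝ᵥ (S *ᵥ x' i) = (lam i 0 - lam j 0)⁻¹ * ((d *ᵥ x j 0) e) * ((d *ᵥ x i 0) e) := by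
    intro j hj
    have hk := key j
    rw [hA0dot j, hBdot, horth j i, if_neg hj] at hk
    have hd : lam i 0 - lam j 0 ≠ 0 := sub_ne_zero.2 (hdist i j (Ne.symm hj))
    field_simp at hk ⊢
    linarith [hk]
  -- the diagonal coefficient vanishes
  have hcoefi : x i 0 ⬝ᵥ (S *ᵥ x' i) = 0 := by
    have hn : HasDerivAt (fun t => x i t ⬝ᵥ (S *ᵥ x i t))
        (x' i ⬝ᵥ (S *ᵥ x i 0) + x i 0 ⬝ᵥ (S *ᵥ x' i)) 0 := by
      have h := hasDerivAt_pi.1 (hx i)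
      have hsum : HasDerivAt (fun t => ∑ v, x i t v * (s0 v * x i t v))
          (∑ v, (x' i v * (s0 v * x i 0 v) + x i 0 v * (s0 v * x' i v))) 0 :=
        HasDerivAt.fun_sum (fun v _ => (h v).fun_mul ((h v).const_mul (s0 v)))
      have : (∑ v, (x' i v * (s0 v * x i 0 v) + x i 0 v * (s0 v * x' i v)))
          = x' i ⬝ᵥ (S *ᵥ x i 0) + x i 0 ⬝ᵥ (S *ᵥ x' i) := by
        simp [hS, dotProduct, Matrix.mulVec_diagonal, Finset.sum_add_distrib]
      rw [← this]
      apply hsum.congr_of_eventuallyEq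
      filter_upwards with t
      simp [hS, dotProduct, Matrix.mulVec_diagonal]
    have hone : HasDerivAt (fun _ : ℝ => (1:ℝ)) 0 0 := hasDerivAt_const 0 1
    have h0 : x' i ⬝ᵥ (S *ᵥ x i 0) + x i 0 ⬝ᵥ (S *ᵥ x' i) = 0 := by
      exact ((hone.congr_of_eventuallyEq (hnorm i)).unique hn).symm
    rw [hSsymm (x' i) (x i 0)] at h0
    linarith
  -- spanning
  have hli : LinearIndependent ℝ (fun j => x j 0) := by
    rw [Fintype.linearIndependent_iff]
    intro g hg k
    have h2 : x k 0 ⬝ᵥ (S *ᵥ (∑ j, g j • x j 0)) = 0 := by rw [hg]; simp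
    rw [Matrix.dotProduct_mulVec, dot_sum'] at h2
    simp only [dotProduct_smul, smul_eq_mul, ← Matrix.dotProduct_mulVec] at h2
    have : ∀ j, x k 0 ⬝ᵥ (S *ᵥ x j 0) = if k = j then 1 else 0 := fun j => horth k j
    simp only [this] at h2
    simpa [Finset.sum_ite_eq] using h2
  have hspan : Submodule.span ℝ (Set.range (fun j => x j 0)) = ⊤ :=
    hli.span_eq_top_of_card_eq_finrank (by simp [Module.finrank_pi])
  -- the claimed sum
  set w := ∑ j ∈ Finset.univ.erase i,
      ((lam i 0 - lam j 0)⁻¹ * ((d *ᵥ x j 0) e) * ((d *ᵥ x i 0) e)) • x j 0 with hw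
  set D := x' i - w with hD
  have hDdot : ∀ k : V, x k 0 ⬝ᵥ (S *ᵥ D) = 0 := by
    intro k
    have hw' : x k 0 ⬝ᵥ (S *ᵥ w) = if k = i then 0 else
        (lam i 0 - lam k 0)⁻¹ * ((d *ᵥ x k 0) e) * ((d *ᵥ x i 0) e) := by
      rw [hw, Matrix.dotProduct_mulVec, dot_sum']
      simp only [dotProduct_smul, smul_eq_mul, ← Matrix.dotProduct_mulVec]
      have : ∀ j, x k 0 ⬝ᵥ (S *ᵥ x j 0) = if k = j then 1 else 0 := fun j => horth k j
      simp only [this]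
      by_cases hk : k = i
      · subst hk
        rw [if_pos rfl]
        apply Finset.sum_eq_zero
        intro j hj
        rw [if_neg (Ne.symm (Finset.ne_of_mem_erase hj)), mul_zero]
      · rw [if_neg hk]
        rw [Finset.sum_eq_single k]
        · simp
        · intro j hj hjk
          rw [if_neg (Ne.symm hjk), mul_zero]
        · intro hk'
          exact absurd (Finset.mem_erase.2 ⟨hk, Finset.mem_univ k⟩) hk'
    rw [hD, Matrix.mulVec_sub, dotProduct_sub, hw']
    by_cases hk : k = i
    · subst hk; rw [hcoefi, if_pos rfl, sub_zero]
    · rw [hcoef k hk, if_neg hk, sub_self]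
  have hDall : ∀ u : V → ℝ, u ⬝ᵥ (S *ᵥ D) = 0 := by
    intro u
    have hu : u ∈ Submodule.span ℝ (Set.range (fun j => x j 0)) := by rw [hspan]; trivial
    induction hu using Submodule.span_induction with
    | mem u hu => obtain ⟨k, rfl⟩ := hu; exact hDdot k
    | zero => simp
    | add u v _ _ hu hv => rw [add_dotProduct, hu, hv, add_zero]
    | smul c u _ hu => rw [smul_dotProduct, hu, smul_zero]
  have hDzero : D = 0 := by
    funext v
    have := hDall (Pi.single v 1)
    rw [single_dotProduct] at this
    simp only [one_mul] at this
    rw [hS, Matrix.mulVec_diagonal] at this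
    have := mul_eq_zero.1 this
    rcases this with h | h
    · exact absurd h (hs0 v).ne'
    · exact h
  exact sub_eq_zero.1 hDzero
end

section
/- Fix a real E-by-V matrix d, a diagonal V-by-V matrix ★₀ with positive diagonal, a diagonal E-by-E matrix ★₁, a vertex w ∈ V, and n = |V|. For t ∈ ℝ let ★₀(t) = ★₀ + t E_ww. Suppose xⁱ(t) ∈ ℝ^V and λⁱ(t) ∈ ℝ (i = 1, …, n) are differentiable at 0, satisfy dᵀ★₁d xⁱ(t) = λⁱ(t) ★₀(t) xⁱ(t) and (xⁱ(t))ᵀ★₀(t)xⁱ(t) = 1 near 0, satisfy (xⁱ(0))ᵀ★₀xʲ(0) = δᵢⱼ, and the eigenvalues λ¹(0), …, λⁿ(0) are pairwise distinct. Let ℒ : ℝⁿ × (ℝ^V)ⁿ → ℝ be differentiable. Then d/dt ℒ(λ¹(t), …, λⁿ(t), x¹(t), …, xⁿ(t)) at t = 0 equals −Σᵢ (∂ℒ/∂λⁱ) λⁱ (xⁱ_w)² + Σ_{i,v,j} (∂ℒ/∂xⁱᵥ) Nᵢⱼ xʲ_w xⁱ_w xʲᵥ, where all quantities on the right are evaluated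 at t = 0, Nᵢⱼ = λⁱ/(λʲ − λⁱ) for i ≠ j, and Nᵢᵢ = −1/2. -/
open Matrix Filter Topology

lemma aux_mulVec {E V : Type*} [Fintype E] [Fintype V] (A : Matrix E V ℝ)
    {f : ℝ → V → ℝ} {f' : V → ℝ} {t : ℝ} (hf : HasDerivAt f f' t) :
    HasDerivAt (fun s => A *ᵥ f s) (A *ᵥ f') t := by
  have h := ((Matrix.mulVecLin A).toContinuousLinearMap.hasFDerivAt
    (x := f t)).comp_hasDerivAt t hf
  exact h

lemma aux_dot {V : Type*} [Fintype V] {f g : ℝ → V → ℝ} {f' g' : V → ℝ} {t : ℝ}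
    (hf : HasDerivAt f f' t) (hg : HasDerivAt g g' t) :
    HasDerivAt (fun s => f s ⬝ᵥ g s) (f' ⬝ᵥ g t + f t ⬝ᵥ g') t := by
  have h : ∀ v : V, HasDerivAt (fun s => f s v * g s v)
      (f' v * g t v + f t v * g' v) t :=
    fun v => ((hasDerivAt_pi.1 hf) v).mul ((hasDerivAt_pi.1 hg) v)
  have := HasDerivAt.fun_sum (u := Finset.univ) (fun v _ => h v)
  simpa [dotProduct, Finset.sum_add_distrib] using this

/-- Scalar case of the first backpropagation formula of Proposition 1: for a
differentiable loss `ℒ(λ¹,…,λⁿ, x¹,…,xⁿ)` and the perturbation `★₀(t) = ★₀ + t E_ww` of the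
pencil `(dᵀ★₁d, ★₀(t))` with `★₀`-orthonormal eigenvectors and pairwise distinct eigenvalues,
`d/dt ℒ(λ(t), x(t))|₀ = −Σᵢ (∂ℒ/∂λⁱ) λⁱ (xⁱ_w)² + Σ_{i,v,j} (∂ℒ/∂xⁱᵥ) Nᵢⱼ xʲ_w xⁱ_w xʲᵥ`,
where `Nᵢⱼ = λⁱ/(λʲ − λⁱ)` for `i ≠ j` and `Nᵢᵢ = −1/2`. The partial derivatives of `ℒ` are
expressed via its Fréchet derivative applied to coordinate basis directions. -/
theorem stmt_14 {E V : Type*} [Fintype E] [Fintype V] [DecidableEq E] [DecidableEq V]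
    (d : Matrix E V ℝ) (s0 : V → ℝ) (hs0 : ∀ v, 0 < s0 v) (s1 : E → ℝ) (w : V)
    (x : V → ℝ → V → ℝ) (lam : V → ℝ → ℝ)
    (x' : V → V → ℝ) (lam' : V → ℝ)
    (hx : ∀ i, HasDerivAt (x i) (x' i) 0)
    (hlam : ∀ i, HasDerivAt (lam i) (lam' i) 0)
    (heig : ∀ i, ∀ᶠ t in 𝓝 (0 : ℝ),
      (dᵀ * Matrix.diagonal s1 * d) *ᵥ x i t
        = lam i t • ((Matrix.diagonal s0 + t • Matrix.single w w 1) *ᵥ x i t))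
    (hnorm : ∀ i, ∀ᶠ t in 𝓝 (0 : ℝ),
      x i t ⬝ᵥ ((Matrix.diagonal s0 + t • Matrix.single w w 1) *ᵥ x i t) = 1)
    (horth : ∀ i j, x i 0 ⬝ᵥ (Matrix.diagonal s0 *ᵥ x j 0) = if i = j then 1 else 0)
    (hdist : ∀ i j, i ≠ j → lam i 0 ≠ lam j 0)
    (L : (V → ℝ) × (V → V → ℝ) → ℝ)
    (hL : DifferentiableAt ℝ L ((fun i => lam i 0), (fun i => x i 0))) :
    HasDerivAt (fun t => L ((fun i => lam i t), (fun i => x i t)))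
      (-(∑ i, (fderiv ℝ L ((fun i => lam i 0), (fun i => x i 0))
            (Pi.single i 1, 0)) * lam i 0 * (x i 0 w) ^ 2)
        + ∑ i, ∑ v, ∑ j,
          (fderiv ℝ L ((fun i => lam i 0), (fun i => x i 0))
            (0, Pi.single i (Pi.single v 1)))
          * (if j = i then (-(1 : ℝ) / 2) else lam i 0 / (lam j 0 - lam i 0))
          * x j 0 w * x i 0 w * x j 0 v) 0 := by
  classical
  set A := dᵀ * Matrix.diagonal s1 * d with hAdef
  set B := Matrix.diagonal s0 with hBdef
  set Ew := Matrix.single w w (1:ℝ) with hEwdef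
  have hEdot : ∀ u v : V → ℝ, u ⬝ᵥ (Ew *ᵥ v) = u w * v w := by
    intro u v
    simp [hEwdef, dotProduct, mulVec, Matrix.single, ite_and, Finset.mul_sum]
  have hBcomm : ∀ u v : V → ℝ, u ⬝ᵥ (B *ᵥ v) = v ⬝ᵥ (B *ᵥ u) := by
    intro u v
    simp only [hBdef, dotProduct, Matrix.mulVec_diagonal]
    exact Finset.sum_congr rfl (by intros; ring)
  have hAsym : Aᵀ = A := by simp [hAdef, Matrix.transpose_mul, Matrix.mul_assoc]
  have hAdot : ∀ u v : V → ℝ, u ⬝ᵥ (A *ᵥ v) = (A *ᵥ u) ⬝ᵥ v := by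
    intro u v
    rw [Matrix.dotProduct_mulVec, ← Matrix.mulVec_transpose, hAsym]
  have heig0 : ∀ i, A *ᵥ x i 0 = lam i 0 • (B *ᵥ x i 0) := by
    intro i
    have h := (heig i).self_of_nhds
    simpa using h
  -- derivative of (B + t Ew) *ᵥ x i t
  have hBt : ∀ i, HasDerivAt (fun t : ℝ => (B + t • Ew) *ᵥ x i t)
      (B *ᵥ x' i + Ew *ᵥ x i 0) 0 := by
    intro i
    have h1 := (aux_mulVec B (hx i)).add
      ((hasDerivAt_id (0:ℝ)).smul (aux_mulVec Ew (hx i)))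
    have h2 : (fun t : ℝ => (B + t • Ew) *ᵥ x i t)
        = fun t => B *ᵥ x i t + t • (Ew *ᵥ x i t) := by
      funext t; rw [Matrix.add_mulVec, Matrix.smul_mulVec]
    rw [h2]
    exact h1.congr_deriv (by simp)
  -- differentiated eigenvalue equation
  have key : ∀ i, A *ᵥ x' i
      = lam i 0 • (B *ᵥ x' i + Ew *ᵥ x i 0) + lam' i • (B *ᵥ x i 0) := by
    intro i
    have hF : HasDerivAt (fun t => A *ᵥ x i t) (A *ᵥ x' i) 0 := aux_mulVec A (hx i)
    have hG : HasDerivAt (fun t => lam i t • ((B + t • Ew) *ᵥ x i t))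
        (lam i 0 • (B *ᵥ x' i + Ew *ᵥ x i 0) + lam' i • ((B + (0:ℝ) • Ew) *ᵥ x i 0)) 0 :=
      (hlam i).smul (hBt i)
    have h := hF.unique (hG.congr_of_eventuallyEq (heig i))
    rw [h]
    simp
  -- differentiated normalization
  have hnorm' : ∀ i, x' i ⬝ᵥ (B *ᵥ x i 0)
      + x i 0 ⬝ᵥ (B *ᵥ x' i + Ew *ᵥ x i 0) = 0 := by
    intro i
    have h1 : HasDerivAt (fun t => x i t ⬝ᵥ ((B + t • Ew) *ᵥ x i t))
        (x' i ⬝ᵥ ((B + (0:ℝ) • Ew) *ᵥ x i 0) + x i 0 ⬝ᵥ (B *ᵥ x' i + Ew *ᵥ x i 0)) 0 :=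
      aux_dot (hx i) (hBt i)
    have h2 : HasDerivAt (fun t => x i t ⬝ᵥ ((B + t • Ew) *ᵥ x i t)) 0 (0:ℝ) :=
      (hasDerivAt_const (0:ℝ) (1:ℝ)).congr_of_eventuallyEq (hnorm i)
    have h := h1.unique h2
    simpa using h
  set c : V → V → ℝ := fun i j => x j 0 ⬝ᵥ (B *ᵥ x' i) with hcdef
  -- scalar form of key, dotted with x j 0
  have skey : ∀ i j, lam j 0 * c i j
      = lam i 0 * (c i j + x j 0 w * x i 0 w)
        + lam' i * (if j = i then 1 else 0) := by
    intro i j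
    have h := congrArg (fun y => x j 0 ⬝ᵥ y) (key i)
    simp only [dotProduct_add, dotProduct_smul, smul_eq_mul] at h
    rw [hEdot, horth j i] at h
    have hLHS : x j 0 ⬝ᵥ (A *ᵥ x' i) = lam j 0 * c i j := by
      rw [hAdot, heig0 j, smul_dotProduct, dotProduct_comm,
        hBcomm (x' i) (x j 0)]
      rfl
    rw [hLHS] at h
    rw [h]
  have hlam'eq : ∀ i, lam' i = -(lam i 0 * (x i 0 w) ^ 2) := by
    intro i
    have h := skey i i
    simp only [eq_self_iff_true, if_true, if_pos, mul_one] at h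
    have : lam' i = -(lam i 0 * (x i 0 w * x i 0 w)) := by linarith [h]
    rw [this, sq]
  have hcii : ∀ i, c i i = -(1:ℝ)/2 * (x i 0 w * x i 0 w) := by
    intro i
    have h := hnorm' i
    rw [dotProduct_add, hEdot, hBcomm (x' i) (x i 0)] at h
    have : x i 0 ⬝ᵥ (B *ᵥ x' i) = c i i := rfl
    rw [this] at h
    linarith [h]
  have hcij : ∀ i j, j ≠ i →
      c i j = lam i 0 / (lam j 0 - lam i 0) * (x j 0 w * x i 0 w) := by
    intro i j hij
    have h := skey i j
    rw [if_neg hij, mul_zero, add_zero] at h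
    have hne : lam j 0 - lam i 0 ≠ 0 := sub_ne_zero.2 (hdist j i hij)
    rw [div_mul_eq_mul_div, eq_div_iff hne]
    linear_combination h
  have hcfull : ∀ i j, c i j
      = (if j = i then (-(1:ℝ)/2) else lam i 0 / (lam j 0 - lam i 0))
        * (x j 0 w * x i 0 w) := by
    intro i j
    by_cases h : j = i
    · rw [if_pos h, h]; exact hcii i
    · rw [if_neg h]; exact hcij i j h
  -- completeness of the B-orthonormal family
  set X : Matrix V V ℝ := Matrix.of (fun j v => x j 0 v) with hXdef
  have hXB : X * B * Xᵀ = 1 := by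
    ext i j
    have h1 : (X * B * Xᵀ) i j = x i 0 ⬝ᵥ (B *ᵥ x j 0) := by
      simp [Matrix.mul_apply, Matrix.mulVec, dotProduct, hXdef, hBdef,
        Matrix.diagonal, Finset.sum_mul, mul_comm, mul_assoc, mul_left_comm]
    rw [h1, horth i j, Matrix.one_apply]
  set Binv : Matrix V V ℝ := Matrix.diagonal (fun v => (s0 v)⁻¹) with hBinvdef
  have hBinvB : Binv * B = 1 := by
    have hfun : (fun v => (s0 v)⁻¹ * s0 v) = fun _ => (1:ℝ) :=
      funext fun v => inv_mul_cancel₀ (ne_of_gt (hs0 v))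
    rw [hBinvdef, hBdef, Matrix.diagonal_mul_diagonal, hfun, Matrix.diagonal_one]
  have hXtXB : Xᵀ * X * B = 1 := by
    have h1 : X * (B * Xᵀ) = 1 := by rw [← Matrix.mul_assoc]; exact hXB
    have h2 : B * Xᵀ * X = 1 := mul_eq_one_comm.1 h1
    have h3 : B * (Xᵀ * X) = 1 := by rw [← Matrix.mul_assoc]; exact h2
    have h4 : Xᵀ * X = Binv := by
      calc Xᵀ * X = (Binv * B) * (Xᵀ * X) := by rw [hBinvB, Matrix.one_mul]
        _ = Binv * (B * (Xᵀ * X)) := by rw [Matrix.mul_assoc]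
        _ = Binv := by rw [h3, Matrix.mul_one]
    rw [h4]
    exact hBinvB
  have hexp : ∀ y : V → ℝ, ∀ v, y v = ∑ j, (x j 0 ⬝ᵥ (B *ᵥ y)) * x j 0 v := by
    intro y v
    have h5 : (Xᵀ * X * B) *ᵥ y = y := by rw [hXtXB, Matrix.one_mulVec]
    have h6 := congrFun h5 v
    calc y v = ((Xᵀ * X * B) *ᵥ y) v := h6.symm
      _ = (Xᵀ *ᵥ (X *ᵥ (B *ᵥ y))) v := by
          rw [← Matrix.mulVec_mulVec, ← Matrix.mulVec_mulVec]
      _ = ∑ j, (x j 0 ⬝ᵥ (B *ᵥ y)) * x j 0 v := by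
          simp [Matrix.mulVec, dotProduct, hXdef, Matrix.transpose_apply, mul_comm]
  have hx'eq : ∀ i v, x' i v = ∑ j, c i j * x j 0 v := fun i v => hexp (x' i) v
  -- chain rule
  set p : (V → ℝ) × (V → V → ℝ) := ((fun i => lam i 0), (fun i => x i 0)) with hpdef
  set φ := fderiv ℝ L p with hφdef
  have hγ : HasDerivAt (fun t => ((fun i => lam i t), (fun i => x i t)))
      ((lam', x') : (V → ℝ) × (V → V → ℝ)) 0 :=
    (hasDerivAt_pi.2 hlam).prodMk (hasDerivAt_pi.2 hx)
  have hcomp : HasDerivAt (fun t => L ((fun i => lam i t), (fun i => x i t)))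
      (φ (lam', x')) 0 := hL.hasFDerivAt.comp_hasDerivAt 0 hγ
  convert hcomp using 1
  -- decompose the derivative value
  have h1 : ((lam', (0 : V → V → ℝ)) : (V → ℝ) × (V → V → ℝ))
      = ∑ i, lam' i • (((Pi.single i 1 : V → ℝ)), (0 : V → V → ℝ)) := by
    apply Prod.ext
    · rw [Prod.fst_sum]
      funext j
      simp [Finset.sum_apply, Pi.single_apply]
    · rw [Prod.snd_sum]
      simp
  have h2 : (((0 : V → ℝ), x') : (V → ℝ) × (V → V → ℝ))
      = ∑ i, ∑ v, x' i v • (((0 : V → ℝ)),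
          (Pi.single i (Pi.single v 1) : V → V → ℝ)) := by
    apply Prod.ext
    · rw [Prod.fst_sum]
      simp [Prod.fst_sum]
    · rw [Prod.snd_sum]
      funext k u
      simp only [Prod.snd_sum, Finset.sum_apply, Pi.smul_apply, Prod.smul_snd]
      simp [Pi.single_apply, ite_apply, Finset.sum_apply]
  have hval : φ (lam', x') = (∑ i, lam' i * φ (Pi.single i 1, 0))
      + ∑ i, ∑ v, x' i v * φ (0, Pi.single i (Pi.single v 1)) := by
    have hs : ((lam', x') : (V → ℝ) × (V → V → ℝ))
        = (lam', (0 : V → V → ℝ)) + ((0 : V → ℝ), x') := by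
      simp [Prod.ext_iff]
    rw [hs, map_add, h1, h2, map_sum]
    simp only [map_sum, _root_.map_smul, smul_eq_mul]
  rw [hval]
  congr 1
  · rw [← Finset.sum_neg_distrib]
    exact Finset.sum_congr rfl fun i _ => by rw [hlam'eq i]; ring
  · refine Finset.sum_congr rfl fun i _ => Finset.sum_congr rfl fun v _ => ?_
    rw [hx'eq i v, Finset.sum_mul]
    exact Finset.sum_congr rfl fun j _ => by rw [hcfull i j]; ring
end

section
/- Fix a real E-by-V matrix d, a diagonal V-by-V matrix ★₀ with positive diagonal, a diagonal E-by-E matrix ★₁, an edge e ∈ E, and n = |V|. For t ∈ ℝ let ★₁(t) = ★₁ + t Eₑₑ. Suppose xⁱ(t) ∈ ℝ^V and λⁱ(t) ∈ ℝ (i = 1, …, n) are differentiable at 0, satisfy dᵀ★₁(t)d xⁱ(t) = λⁱ(t) ★₀ xⁱ(t) and (xⁱ(t))ᵀ★₀xⁱ(t) = 1 near 0, satisfy (xⁱ(0))ᵀ★₀xʲ(0) = δᵢⱼ, and the eigenvalues λ¹(0), …, λⁿ(0) are pairwise distinct. Let ℒ : ℝⁿ × (ℝ^V)ⁿ → ℝ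 be differentiable. Then d/dt ℒ(λ¹(t), …, λⁿ(t), x¹(t), …, xⁿ(t)) at t = 0 equals Σᵢ (∂ℒ/∂λⁱ) (yⁱₑ)² + Σ_{i,v,j} (∂ℒ/∂xⁱᵥ) Mᵢⱼ xʲᵥ yʲₑ yⁱₑ, where all quantities on the right are evaluated at t = 0, yⁱ = d xⁱ(0), Mᵢⱼ = (λⁱ − λʲ)⁻¹ for i ≠ j, and Mᵢᵢ = 0. -/
open Matrix Filter Topology

/-- Scalar case of the second backpropagation formula of Proposition 1: for a
differentiable loss `ℒ(λ¹,…,λⁿ, x¹,…,xⁿ)` and the perturbation `★₁(t) = ★₁ + t Eₑₑ` of the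
pencil `(dᵀ★₁(t)d, ★₀)` with `★₀`-orthonormal eigenvectors and pairwise distinct eigenvalues,
`d/dt ℒ(λ(t), x(t))|₀ = Σᵢ (∂ℒ/∂λⁱ) (yⁱₑ)² + Σ_{i,v,j} (∂ℒ/∂xⁱᵥ) Mᵢⱼ xʲᵥ yʲₑ yⁱₑ`,
where `yⁱ = d xⁱ(0)`, `Mᵢⱼ = (λⁱ − λʲ)⁻¹` for `i ≠ j` and `Mᵢᵢ = 0`. The partial derivatives
of `ℒ` are expressed via its Fréchet derivative applied to coordinate basis directions. -/
theorem stmt_15 {E V : Type*} [Fintype E] [Fintype V] [DecidableEq E] [DecidableEq V]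
    (d : Matrix E V ℝ) (s0 : V → ℝ) (hs0 : ∀ v, 0 < s0 v) (s1 : E → ℝ) (e : E)
    (x : V → ℝ → V → ℝ) (lam : V → ℝ → ℝ)
    (x' : V → V → ℝ) (lam' : V → ℝ)
    (hx : ∀ i, HasDerivAt (x i) (x' i) 0)
    (hlam : ∀ i, HasDerivAt (lam i) (lam' i) 0)
    (heig : ∀ i, ∀ᶠ t in 𝓝 (0 : ℝ),
      (dᵀ * (Matrix.diagonal s1 + t • Matrix.single e e 1) * d) *ᵥ x i t
        = lam i t • (Matrix.diagonal s0 *ᵥ x i t))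
    (hnorm : ∀ i, ∀ᶠ t in 𝓝 (0 : ℝ), x i t ⬝ᵥ (Matrix.diagonal s0 *ᵥ x i t) = 1)
    (horth : ∀ i j, x i 0 ⬝ᵥ (Matrix.diagonal s0 *ᵥ x j 0) = if i = j then 1 else 0)
    (hdist : ∀ i j, i ≠ j → lam i 0 ≠ lam j 0)
    (L : (V → ℝ) × (V → V → ℝ) → ℝ)
    (hL : DifferentiableAt ℝ L ((fun i => lam i 0), (fun i => x i 0))) :
    HasDerivAt (fun t => L ((fun i => lam i t), (fun i => x i t)))
      ((∑ i, (fderiv ℝ L ((fun i => lam i 0), (fun i => x i 0))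
            (Pi.single i 1, 0)) * ((d *ᵥ x i 0) e) ^ 2)
        + ∑ i, ∑ v, ∑ j,
          (fderiv ℝ L ((fun i => lam i 0), (fun i => x i 0))
            (0, Pi.single i (Pi.single v 1)))
          * (if j = i then 0 else (lam i 0 - lam j 0)⁻¹)
          * x j 0 v * ((d *ᵥ x j 0) e) * ((d *ᵥ x i 0) e)) 0 := by
  classical
  -- coordinate derivatives
  have hxc : ∀ i v, HasDerivAt (fun t => x i t v) (x' i v) 0 := fun i v =>
    hasDerivAt_pi.mp (hx i) v
  have hdot : ∀ (u : V → ℝ) i, HasDerivAt (fun t => u ⬝ᵥ x i t) (u ⬝ᵥ x' i) 0 := by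
    intro u i
    simpa only [dotProduct] using HasDerivAt.fun_sum (fun v _ => ((hxc i v).const_mul (u v)))
  set A0 : Matrix V V ℝ := dᵀ * Matrix.diagonal s1 * d with hA0
  set A1 : Matrix V V ℝ := dᵀ * Matrix.single e e (1:ℝ) * d with hA1
  have hAsplit : ∀ t : ℝ, dᵀ * (Matrix.diagonal s1 + t • Matrix.single e e (1:ℝ)) * d
      = A0 + t • A1 := by
    intro t; rw [hA0, hA1, Matrix.mul_add, Matrix.add_mul, Matrix.mul_smul, Matrix.smul_mul]
  have hA0t : A0ᵀ = A0 := by simp [hA0, Matrix.transpose_mul, Matrix.mul_assoc]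
  have hS0t : (Matrix.diagonal s0)ᵀ = Matrix.diagonal s0 := Matrix.diagonal_transpose s0
  have hsym : ∀ (M : Matrix V V ℝ), Mᵀ = M → ∀ a b : V → ℝ,
      a ⬝ᵥ (M *ᵥ b) = (M *ᵥ a) ⬝ᵥ b := by
    intro M hM a b
    rw [Matrix.dotProduct_mulVec, ← Matrix.mulVec_transpose, hM]
  have hA1dot : ∀ a b : V → ℝ, a ⬝ᵥ (A1 *ᵥ b) = (d *ᵥ a) e * (d *ᵥ b) e := by
    intro a b
    rw [hA1]
    simp only [← Matrix.mulVec_mulVec]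
    rw [Matrix.dotProduct_mulVec, Matrix.vecMul_transpose]
    simp [Matrix.mulVec, dotProduct, Matrix.single, ite_and, mul_ite, Finset.mul_sum]
  have heig0 : ∀ i, A0 *ᵥ x i 0 = lam i 0 • (Matrix.diagonal s0 *ᵥ x i 0) := by
    intro i
    have h := (heig i).self_of_nhds
    simpa [hAsplit] using h
  -- key derivative identity
  have key : ∀ i j, lam j 0 * (x j 0 ⬝ᵥ (Matrix.diagonal s0 *ᵥ x' i))
      + (d *ᵥ x j 0) e * (d *ᵥ x i 0) e
      = lam' i * (if j = i then 1 else 0)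
        + lam i 0 * (x j 0 ⬝ᵥ (Matrix.diagonal s0 *ᵥ x' i)) := by
    intro i j
    have hfun : ∀ t : ℝ, x j 0 ⬝ᵥ
        ((dᵀ * (Matrix.diagonal s1 + t • Matrix.single e e (1:ℝ)) * d) *ᵥ x i t)
        = (x j 0 ᵥ* A0) ⬝ᵥ x i t + t * ((x j 0 ᵥ* A1) ⬝ᵥ x i t) := by
      intro t
      rw [hAsplit t, Matrix.add_mulVec, Matrix.smul_mulVec, dotProduct_add,
        dotProduct_smul, Matrix.dotProduct_mulVec, Matrix.dotProduct_mulVec, smul_eq_mul]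
    have hφ : HasDerivAt (fun t => x j 0 ⬝ᵥ
        ((dᵀ * (Matrix.diagonal s1 + t • Matrix.single e e (1:ℝ)) * d) *ᵥ x i t))
        (x j 0 ⬝ᵥ (A0 *ᵥ x' i) + x j 0 ⬝ᵥ (A1 *ᵥ x i 0)) 0 := by
      simp only [hfun]
      rw [Matrix.dotProduct_mulVec, Matrix.dotProduct_mulVec]
      simpa using (hdot (x j 0 ᵥ* A0) i).fun_add ((hasDerivAt_id (0:ℝ)).fun_mul (hdot (x j 0 ᵥ* A1) i))
    have hψ : HasDerivAt (fun t => lam i t * (x j 0 ⬝ᵥ (Matrix.diagonal s0 *ᵥ x i t)))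
        (lam' i * (x j 0 ⬝ᵥ (Matrix.diagonal s0 *ᵥ x i 0))
          + lam i 0 * (x j 0 ⬝ᵥ (Matrix.diagonal s0 *ᵥ x' i))) 0 := by
      have h2 := hdot (x j 0 ᵥ* Matrix.diagonal s0) i
      simp only [← Matrix.dotProduct_mulVec] at h2
      exact (hlam i).mul h2
    have heq : (fun t => x j 0 ⬝ᵥ
        ((dᵀ * (Matrix.diagonal s1 + t • Matrix.single e e (1:ℝ)) * d) *ᵥ x i t))
        =ᶠ[𝓝 (0:ℝ)] (fun t => lam i t * (x j 0 ⬝ᵥ (Matrix.diagonal s0 *ᵥ x i t))) :=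
      (heig i).mono fun t ht => by simp only [ht, dotProduct_smul, smul_eq_mul]
    have huniq : lam' i * (x j 0 ⬝ᵥ (Matrix.diagonal s0 *ᵥ x i 0))
        + lam i 0 * (x j 0 ⬝ᵥ (Matrix.diagonal s0 *ᵥ x' i))
        = x j 0 ⬝ᵥ (A0 *ᵥ x' i) + x j 0 ⬝ᵥ (A1 *ᵥ x i 0) :=
      hψ.unique (hφ.congr_of_eventuallyEq heq.symm)
    have e1 : x j 0 ⬝ᵥ (A0 *ᵥ x' i)
        = lam j 0 * (x j 0 ⬝ᵥ (Matrix.diagonal s0 *ᵥ x' i)) := by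
      rw [hsym A0 hA0t, heig0 j, smul_dotProduct, smul_eq_mul,
        ← hsym (Matrix.diagonal s0) hS0t]
    have e2 : x j 0 ⬝ᵥ (A1 *ᵥ x i 0) = (d *ᵥ x j 0) e * (d *ᵥ x i 0) e := hA1dot _ _
    have e3 : x j 0 ⬝ᵥ (Matrix.diagonal s0 *ᵥ x i 0) = if j = i then 1 else 0 := horth j i
    rw [e1, e2] at huniq
    rw [e3] at huniq
    exact huniq.symm
  -- lam' formula
  have hlam'eq : ∀ i, lam' i = ((d *ᵥ x i 0) e) ^ 2 := by
    intro i
    have k := key i i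
    simp at k
    rw [sq]
    linarith [k]
  -- c i i = 0
  have hcii : ∀ i, x i 0 ⬝ᵥ (Matrix.diagonal s0 *ᵥ x' i) = 0 := by
    intro i
    have hN : HasDerivAt (fun t => x i t ⬝ᵥ (Matrix.diagonal s0 *ᵥ x i t))
        (∑ v, (x' i v * (s0 v * x i 0 v) + x i 0 v * (s0 v * x' i v))) 0 := by
      simp only [dotProduct, Matrix.mulVec_diagonal]
      exact HasDerivAt.fun_sum fun v _ => ((hxc i v).fun_mul ((hxc i v).const_mul (s0 v)))
    have hNc : HasDerivAt (fun t => x i t ⬝ᵥ (Matrix.diagonal s0 *ᵥ x i t)) 0 0 :=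
      (hasDerivAt_const (0:ℝ) (1:ℝ)).congr_of_eventuallyEq (hnorm i)
    have h0 := hNc.unique hN
    have hsum : (∑ v, (x' i v * (s0 v * x i 0 v) + x i 0 v * (s0 v * x' i v)))
        = 2 * (x i 0 ⬝ᵥ (Matrix.diagonal s0 *ᵥ x' i)) := by
      simp only [dotProduct, Matrix.mulVec_diagonal, Finset.mul_sum]
      exact Finset.sum_congr rfl fun v _ => by ring
    rw [hsum] at h0
    linarith
  -- full c formula
  have hc : ∀ i j, x j 0 ⬝ᵥ (Matrix.diagonal s0 *ᵥ x' i)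
      = (if j = i then 0 else (lam i 0 - lam j 0)⁻¹) * ((d *ᵥ x j 0) e * (d *ᵥ x i 0) e) := by
    intro i j
    by_cases h : j = i
    · subst h; simp [hcii]
    · have k := key i j
      rw [if_neg h] at k
      have hne : lam i 0 - lam j 0 ≠ 0 := sub_ne_zero.mpr (hdist i j (Ne.symm h))
      rw [if_neg h]
      field_simp
      nlinarith [k]
  -- basis expansion
  have hexp : ∀ w : V → ℝ, ∀ v, w v
      = ∑ j, x j 0 v * (x j 0 ⬝ᵥ (Matrix.diagonal s0 *ᵥ w)) := by
    set X : Matrix V V ℝ := Matrix.of (fun j v => x j 0 v) with hX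
    have h1 : X * (Matrix.diagonal s0 * Xᵀ) = 1 := by
      ext i j
      have h := horth i j
      simp only [dotProduct, Matrix.mulVec_diagonal] at h
      simp only [Matrix.mul_apply, Matrix.transpose_apply, hX, Matrix.of_apply,
        Matrix.one_apply, Matrix.diagonal_apply, ite_mul, zero_mul, Finset.sum_ite_eq,
        Finset.mem_univ, if_true]
      rw [← h]
    have h2 : (Xᵀ * X) * Matrix.diagonal s0 = 1 := by
      have h1' := mul_eq_one_comm.mp h1
      rw [Matrix.mul_assoc] at h1'
      exact mul_eq_one_comm.mp h1'
    intro w v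
    have hw : Xᵀ *ᵥ (X *ᵥ (Matrix.diagonal s0 *ᵥ w)) = w := by
      rw [Matrix.mulVec_mulVec, Matrix.mulVec_mulVec, h2, Matrix.one_mulVec]
    conv_lhs => rw [← hw]
    simp only [Matrix.mulVec, dotProduct, Matrix.transpose_apply, hX, Matrix.of_apply]
  -- chain rule
  have hD : HasDerivAt (fun t => L ((fun i => lam i t), (fun i => x i t)))
      (fderiv ℝ L ((fun i => lam i 0), (fun i => x i 0)) (lam', x')) 0 := by
    have h1 : HasDerivAt (fun t => (fun i => lam i t : V → ℝ)) lam' 0 := hasDerivAt_pi.mpr hlam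
    have h2 : HasDerivAt (fun t => (fun i => x i t : V → V → ℝ)) x' 0 := hasDerivAt_pi.mpr hx
    exact hL.hasFDerivAt.comp_hasDerivAt 0 (h1.prodMk h2)
  convert hD using 1
  set D := fderiv ℝ L ((fun i => lam i 0), (fun i => x i 0)) with hDdef
  have hsplit : ((lam', x') : (V → ℝ) × (V → V → ℝ))
      = (∑ i, lam' i • ((Pi.single i 1, 0) : (V → ℝ) × (V → V → ℝ)))
        + ∑ i, ∑ v, x' i v • ((0, Pi.single i (Pi.single v 1)) : (V → ℝ) × (V → V → ℝ)) := by
    rw [Prod.ext_iff]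
    constructor
    · simp only [Prod.fst_add, Prod.fst_sum, Prod.smul_fst, smul_zero]
      funext v
      simp [Finset.sum_apply, Pi.single_apply]
    · simp only [Prod.snd_add, Prod.snd_sum, Prod.smul_snd, smul_zero]
      funext i0 v0
      simp [Finset.sum_apply, Pi.single_apply, apply_ite (fun g : V → ℝ => g v0),
        Finset.sum_ite_eq]
  rw [hsplit, map_add, map_sum, map_sum]
  congr 1
  · refine Finset.sum_congr rfl fun i _ => ?_
    rw [_root_.map_smul, smul_eq_mul, hlam'eq i]
    exact mul_comm _ _
  · refine Finset.sum_congr rfl fun i _ => ?_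
    rw [map_sum]
    refine Finset.sum_congr rfl fun v _ => ?_
    rw [_root_.map_smul, smul_eq_mul]
    have hx'v : x' i v = ∑ j, x j 0 v * ((if j = i then 0 else (lam i 0 - lam j 0)⁻¹)
        * ((d *ᵥ x j 0) e * (d *ᵥ x i 0) e)) := by
      rw [hexp (x' i) v]
      exact Finset.sum_congr rfl fun j _ => by rw [hc i j]
    rw [hx'v, Finset.sum_mul]
    exact Finset.sum_congr rfl fun j _ => by ring
end
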